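/- Let f₁(x)=x/(4x+4), f₂(x)=x/4. For words v, w ∈ {1,2}^k with v < w in the lexicographic order (where 1 < 2 and comparison is from the left), the compositions satisfy f_v(x) < f_w(x) for all x > 0. -/

import Mathlib

/-- f₁(x) = x/(4x+4) -/
noncomputable def f1 (x : ℝ) : ℝ := x / (4*x + 4)

/-- f₂(x) = x/4 -/
noncomputable def f2 (x : ℝ) : ℝ := x / 4

/-- For a word `u` (with `false` standing for the symbol 1 and `true` for 2),
`compW u = f_{u₁} ∘ ⋯ ∘ f_{u_k}`. -/
noncomputable def compW (u : List Bool) : ℝ → ℝ :=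
  u.foldr (fun b g => (if b then f2 else f1) ∘ g) id

/-- If v < w (words of length k in {1,2}) in the order of the paper, namely
1^k < 21^{k-1} < 121^{k-2} < ⋯ < 12^{k-1} < 2^k, i.e. the lexicographic order on
the reversed words induced by 1 < 2, then f_v(x) < f_w(x) for all x > 0. -/
noncomputable def f1it : ℕ → ℝ → ℝ
  | 0, x => x
  | n+1, x => f1 (f1it n x)

lemma f1_pos {x : ℝ} (hx : 0 < x) : 0 < f1 x := by
  unfold f1; positivity

lemma f2_pos {x : ℝ} (hx : 0 < x) : 0 < f2 x := by
  unfold f2; positivity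

lemma f1_mono {a b : ℝ} (ha : 0 < a) (hab : a ≤ b) : f1 a ≤ f1 b := by
  unfold f1
  rw [div_le_div_iff₀ (by linarith) (by linarith)]
  nlinarith

lemma f1_lt_f2 {x : ℝ} (hx : 0 < x) : f1 x < f2 x := by
  unfold f1 f2
  rw [div_lt_div_iff₀ (by linarith) (by norm_num)]
  nlinarith

lemma compW_cons (b : Bool) (u : List Bool) (x : ℝ) :
    compW (b :: u) x = (if b then f2 else f1) (compW u x) := rfl

lemma compW_append (u v : List Bool) (x : ℝ) :
    compW (u ++ v) x = compW u (compW v x) := by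
  induction u with
  | nil => rfl
  | cons b u ih => rw [List.cons_append, compW_cons, compW_cons, ih]

lemma compW_pos (u : List Bool) {x : ℝ} (hx : 0 < x) : 0 < compW u x := by
  induction u with
  | nil => exact hx
  | cons b u ih =>
    rw [compW_cons]
    cases b
    · exact f1_pos ih
    · exact f2_pos ih

lemma f1it_pos (n : ℕ) {x : ℝ} (hx : 0 < x) : 0 < f1it n x := by
  induction n with
  | zero => exact hx
  | succ n ih => exact f1_pos ih

lemma compW_upper (u : List Bool) {x : ℝ} (hx : 0 < x) :
    compW u x ≤ x / 4 ^ u.length := by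
  induction u with
  | nil => simp [compW]
  | cons b u ih =>
    rw [compW_cons]
    have h1 : compW u x ≤ x / 4 ^ u.length := ih
    have hp := compW_pos u hx
    have : (if b then f2 else f1) (compW u x) ≤ f2 (compW u x) := by
      cases b
      · simpa using (f1_lt_f2 hp).le
      · simp
    refine this.trans ?_
    unfold f2
    rw [List.length_cons, pow_succ, ← div_div]
    gcongr

lemma compW_lower (u : List Bool) {x : ℝ} (hx : 0 < x) :
    f1it u.length x ≤ compW u x := by
  induction u with
  | nil => simp [compW, f1it]
  | cons b u ih =>
    rw [compW_cons, List.length_cons]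
    have hp := compW_pos u hx
    have h1 : f1 (f1it u.length x) ≤ f1 (compW u x) :=
      f1_mono (f1it_pos _ hx) ih
    have h2 : f1 (compW u x) ≤ (if b then f2 else f1) (compW u x) := by
      cases b
      · simp
      · simpa using (f1_lt_f2 hp).le
    exact le_trans h1 h2

lemma f1it_eq (n : ℕ) {x : ℝ} (hx : 0 < x) :
    f1it n x = 3 * x / (3 * 4 ^ n + (4 * 4 ^ n - 4) * x) := by
  induction n with
  | zero => simp [f1it]
  | succ n ih =>
    have h4 : (1:ℝ) ≤ 4 ^ n := one_le_pow₀ (by norm_num)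
    have hd : (0:ℝ) < 3 * 4 ^ n + (4 * 4 ^ n - 4) * x := by nlinarith
    have hit : f1it n x = 3 * x / (3 * 4 ^ n + (4 * 4 ^ n - 4) * x) := ih
    show f1 (f1it n x) = _
    rw [hit]
    unfold f1
    rw [div_eq_div_iff]
    · rw [div_mul_eq_mul_div, mul_add, mul_div_assoc', div_add' _ _ _ hd.ne', mul_div_assoc', eq_div_iff hd.ne', div_mul_cancel₀ _ hd.ne']
      ring
    · have hnum : (0:ℝ) < 3 * x := by linarith
      have : (0:ℝ) < 3 * x / (3 * 4 ^ n + (4 * 4 ^ n - 4) * x) := by positivity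
      linarith
    · have hpos : (0:ℝ) < 3 * 4 ^ (n+1) + (4 * 4 ^ (n+1) - 4) * x := by
        rw [pow_succ]; nlinarith
      exact hpos.ne'

lemma mid_ineq (n : ℕ) {x : ℝ} (hx : 0 < x) :
    f1 x / 4 ^ n < f1it n (f2 x) := by
  have h4 : (1:ℝ) ≤ 4 ^ n := one_le_pow₀ (by norm_num)
  have h4p : (0:ℝ) < 4 ^ n := by linarith
  have hf2 := f2_pos hx
  rw [f1it_eq n hf2]
  unfold f1 f2
  rw [div_div, div_lt_div_iff₀ (by nlinarith) (by nlinarith)]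
  nlinarith [sq_nonneg x, mul_pos (mul_pos hx hx) h4p]

/-- key lemma: same-length words p q, compW p (f1 x) < compW q (f2 x) -/
lemma key_step (p q : List Bool) (h : p.length = q.length) {x : ℝ} (hx : 0 < x) :
    compW p (f1 x) < compW q (f2 x) := by
  have h1 : compW p (f1 x) ≤ f1 x / 4 ^ p.length := compW_upper p (f1_pos hx)
  have h2 : f1it q.length (f2 x) ≤ compW q (f2 x) := compW_lower q (f2_pos hx)
  have h3 : f1 x / 4 ^ p.length < f1it q.length (f2 x) := by
    rw [h]; exact mid_ineq q.length hx
  linarith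

lemma key (a b : List Bool) (hlen : a.length = b.length)
    (hlex : List.Lex (· < ·) a b) :
    ∀ x : ℝ, 0 < x → compW a.reverse x < compW b.reverse x := by
  induction hlex with
  | nil => simp at hlen
  | @rel a1 l1 b1 l2 hab =>
    intro x hx
    rw [Bool.lt_iff] at hab
    obtain ⟨ha1, hb1⟩ := hab
    subst ha1; subst hb1
    simp only [List.reverse_cons, compW_append]
    have : compW [false] x = f1 x := rfl
    rw [this]
    have : compW [true] x = f2 x := rfl
    rw [this]
    simp only [List.length_cons] at hlen
    exact key_step _ _ (by simpa using hlen) hx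
  | @cons c l1 l2 h ih =>
    intro x hx
    simp only [List.reverse_cons, compW_append]
    simp only [List.length_cons, Nat.succ_inj] at hlen
    have hc : 0 < compW [c] x := compW_pos _ hx
    exact ih hlen _ hc


theorem word_order_monotone (k : ℕ) (v w : List Bool)
    (hv : v.length = k) (hw : w.length = k)
    (hlex : List.Lex (· < ·) v.reverse w.reverse)
    (x : ℝ) (hx : 0 < x) :
    compW v x < compW w x := by
  have := key v.reverse w.reverse (by simp [hv, hw]) hlex x hx
  simpa using this
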